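/- (Unit regularized-Newton step bounds, used in Lemma 2.4) Let f : ℝⁿ → ℝ be twice continuously differentiable with ∇²f Lipschitz continuous with constant L_H > 0, and let ε_H > 0. If d solves (∇²f(x) + 2ε_H I) d = -∇f(x), then ‖∇f(x + d)‖ ≤ (L_H/2) ‖d‖² + 2ε_H ‖d‖, and consequently ‖d‖ ≥ (1/(1 + √(1 + L_H/2))) · min( ‖∇f(x + d)‖/ε_H, ε_H ). -/

import Mathlib

open scoped RealInnerProductSpace

set_option synthInstance.maxHeartbeats 1000000
set_option maxHeartbeats 1000000

/-- unit regularized-Newton step bounds, used in Lemma 2.4. -/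
theorem unit_regularized_newton_bounds
    {n : ℕ} (f : EuclideanSpace ℝ (Fin n) → ℝ)
    (gradf : EuclideanSpace ℝ (Fin n) → EuclideanSpace ℝ (Fin n))
    (hessf : EuclideanSpace ℝ (Fin n) → EuclideanSpace ℝ (Fin n) →L[ℝ] EuclideanSpace ℝ (Fin n))
    (hf : ContDiff ℝ 2 f)
    (hgrad : ∀ x, HasGradientAt f (gradf x) x)
    (hhess : ∀ x, HasFDerivAt gradf (hessf x) x)
    (L_H : ℝ) (hLH : 0 < L_H)
    (hlip : ∀ x y, ‖hessf x - hessf y‖ ≤ L_H * ‖x - y‖)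
    (ε_H : ℝ) (hεH : 0 < ε_H)
    (x d : EuclideanSpace ℝ (Fin n))
    (hregnewton : hessf x d + (2*ε_H) • d = -gradf x) :
    ‖gradf (x + d)‖ ≤ L_H/2 * ‖d‖^2 + 2*ε_H*‖d‖ ∧
    (1/(1 + Real.sqrt (1 + L_H/2))) * min (‖gradf (x + d)‖ / ε_H) ε_H ≤ ‖d‖ := by
  -- continuity of the Hessian
  have hcont : Continuous hessf := by
    apply (LipschitzWith.of_dist_le_mul (K := ⟨L_H, hLH.le⟩) ?_).continuous
    intro a b
    simp only [dist_eq_norm]; exact hlip a b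
  -- derivative of t ↦ gradf (x + t • d)
  have hφ : ∀ t : ℝ, HasDerivAt (fun t : ℝ => gradf (x + t • d))
      (hessf (x + t • d) d) t := by
    intro t
    have h1 : HasDerivAt (fun t : ℝ => x + t • d) d t := by
      simpa using ((hasDerivAt_id t).smul_const d).const_add x
    exact (hhess (x + t • d)).comp_hasDerivAt t h1
  have hcont1 : Continuous fun t : ℝ => hessf (x + t • d) d :=
    (hcont.comp (continuous_const.add (continuous_id.smul continuous_const))).clm_apply
      continuous_const
  have hkey : (∫ t in (0:ℝ)..1, hessf (x + t • d) d) = gradf (x + d) - gradf x := by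
    have := intervalIntegral.integral_eq_sub_of_hasDerivAt
      (f := fun t : ℝ => gradf (x + t • d)) (f' := fun t : ℝ => hessf (x + t • d) d)
      (fun t _ => hφ t) (hcont1.intervalIntegrable 0 1)
    simpa using this
  -- Taylor bound
  have hT : ‖gradf (x + d) - gradf x - hessf x d‖ ≤ L_H/2 * ‖d‖^2 := by
    have heq : gradf (x + d) - gradf x - hessf x d
        = ∫ t in (0:ℝ)..1, (hessf (x + t • d) d - hessf x d) := by
      rw [intervalIntegral.integral_sub (hcont1.intervalIntegrable 0 1)
        (intervalIntegrable_const), hkey, intervalIntegral.integral_const]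
      simp
    rw [heq]
    have h1 : ‖∫ t in (0:ℝ)..1, (hessf (x + t • d) d - hessf x d)‖
        ≤ ∫ t in (0:ℝ)..1, ‖hessf (x + t • d) d - hessf x d‖ :=
      intervalIntegral.norm_integral_le_integral_norm (by norm_num)
    have h2 : (∫ t in (0:ℝ)..1, ‖hessf (x + t • d) d - hessf x d‖)
        ≤ ∫ t in (0:ℝ)..1, L_H * t * ‖d‖^2 := by
      apply intervalIntegral.integral_mono_on (by norm_num)
      · exact ((hcont1.sub continuous_const).norm).intervalIntegrable 0 1
      · exact (Continuous.intervalIntegrable (by continuity) 0 1)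
      · intro t ht
        have h3 : hessf (x + t • d) d - hessf x d = (hessf (x + t • d) - hessf x) d :=
          (ContinuousLinearMap.sub_apply _ _ _).symm
        rw [h3]
        calc ‖(hessf (x + t • d) - hessf x) d‖
            ≤ ‖hessf (x + t • d) - hessf x‖ * ‖d‖ :=
              ContinuousLinearMap.le_opNorm _ _
          _ ≤ (L_H * ‖(x + t • d) - x‖) * ‖d‖ := by
              gcongr; exact hlip _ _
          _ = L_H * t * ‖d‖^2 := by
              have : ‖(x + t • d) - x‖ = t * ‖d‖ := by
                simp [norm_smul, abs_of_nonneg ht.1]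
              rw [this]; ring
    have h4 : (∫ t in (0:ℝ)..1, L_H * t * ‖d‖^2) = L_H/2 * ‖d‖^2 := by
      have hfe : (fun t : ℝ => L_H * t * ‖d‖^2) = fun t : ℝ => (L_H * ‖d‖^2) * t := by
        ext t; ring
      rw [hfe, intervalIntegral.integral_const_mul, integral_id]
      ring
    linarith
  -- first claim
  have hrepr : gradf (x + d) = (gradf (x + d) - gradf x - hessf x d) - (2*ε_H) • d := by
    linear_combination (norm := module) hregnewton
  have hnorm2 : ‖(2*ε_H) • d‖ = 2 * ε_H * ‖d‖ := by
    rw [norm_smul, Real.norm_eq_abs, abs_of_nonneg (by positivity : (0:ℝ) ≤ 2*ε_H)]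
  have hfirst : ‖gradf (x + d)‖ ≤ L_H/2 * ‖d‖^2 + 2*ε_H*‖d‖ := by
    calc ‖gradf (x + d)‖
        = ‖(gradf (x + d) - gradf x - hessf x d) - (2*ε_H) • d‖ := by rw [← hrepr]
      _ ≤ ‖gradf (x + d) - gradf x - hessf x d‖ + ‖(2*ε_H) • d‖ := norm_sub_le _ _
      _ ≤ L_H/2 * ‖d‖^2 + 2*ε_H*‖d‖ := by rw [hnorm2]; gcongr
  refine ⟨hfirst, ?_⟩
  -- second claim
  set s := Real.sqrt (1 + L_H/2) with hs
  have hs1 : 1 ≤ s := by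
    have h := Real.sqrt_le_sqrt (show (1:ℝ) ≤ 1 + L_H/2 by linarith)
    rwa [Real.sqrt_one] at h
  have hs2 : s^2 = 1 + L_H/2 := Real.sq_sqrt (by linarith)
  set g := ‖gradf (x + d)‖ with hg
  have hg0 : 0 ≤ g := norm_nonneg _
  have hd0 : 0 ≤ ‖d‖ := norm_nonneg _
  have hspos : 0 < 1 + s := by linarith
  by_cases hc : 1/(1+s) * ε_H ≤ ‖d‖
  · calc 1/(1+s) * min (g / ε_H) ε_H ≤ 1/(1+s) * ε_H :=
          mul_le_mul_of_nonneg_left (min_le_right _ _) (by positivity)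
      _ ≤ ‖d‖ := hc
  · push_neg at hc
    have hdlt : ‖d‖ < 1/(1+s) * ε_H := hc
    have hkey2 : g ≤ (1 + s) * ε_H * ‖d‖ := by
      have h5 : L_H/2 * ‖d‖^2 ≤ L_H/2 * (1/(1+s) * ε_H) * ‖d‖ := by
        have : ‖d‖^2 ≤ (1/(1+s) * ε_H) * ‖d‖ := by
          rw [sq]; gcongr
        nlinarith
      have h6 : L_H/2 * (1/(1+s)) = s - 1 := by
        have hne : (1:ℝ)+s ≠ 0 := by linarith
        field_simp
        nlinarith [hs2]
      calc g ≤ L_H/2 * ‖d‖^2 + 2*ε_H*‖d‖ := hfirst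
        _ ≤ L_H/2 * (1/(1+s) * ε_H) * ‖d‖ + 2*ε_H*‖d‖ := by linarith
        _ = (L_H/2 * (1/(1+s)) + 2) * ε_H * ‖d‖ := by ring
        _ = (1 + s) * ε_H * ‖d‖ := by rw [h6]; ring
    have h7 : g / ε_H ≤ (1+s) * ‖d‖ := by
      rw [div_le_iff₀ hεH]; nlinarith [hkey2]
    calc 1/(1+s) * min (g / ε_H) ε_H ≤ 1/(1+s) * (g / ε_H) :=
          mul_le_mul_of_nonneg_left (min_le_left _ _) (by positivity)
      _ ≤ 1/(1+s) * ((1+s) * ‖d‖) :=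
          mul_le_mul_of_nonneg_left h7 (by positivity)
      _ = ‖d‖ := by field_simp
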